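/- In the level-3 Sierpi\'nski carpet graph $\Gamma_3$, the graph distance between $(0,4)$ and $(9,4)$ is strictly greater than the $\ell_1$ distance 9; in fact it equals 11. -/

import Mathlib

/-- ℓ¹ distance on ℤ². -/
def l1 (u v : ℤ × ℤ) : ℕ := (u.1 - v.1).natAbs + (u.2 - v.2).natAbs

/-- The grid graph on ℤ². -/
def gridGraph : SimpleGraph (ℤ × ℤ) where
  Adj u v := l1 u v = 1
  symm := ⟨by intro u v h; unfold l1 at *; omega⟩
  loopless := ⟨by intro u h; unfold l1 at h; omega⟩

/-- A lattice point is a vertex of the level-`n` discrete Sierpiński carpet. -/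
def carpetVertex (n : ℕ) (p : ℤ × ℤ) : Prop :=
  0 ≤ p.1 ∧ p.1 ≤ 3 ^ (n - 1) ∧ 0 ≤ p.2 ∧ p.2 ≤ 3 ^ (n - 1) ∧
  ∀ s < n - 1, ¬ ((3:ℤ)^s < p.1 % 3^(s+1) ∧ p.1 % 3^(s+1) < 2*3^s ∧
      (3:ℤ)^s < p.2 % 3^(s+1) ∧ p.2 % 3^(s+1) < 2*3^s)

instance (n : ℕ) : DecidablePred (carpetVertex n) := fun p => by
  unfold carpetVertex; infer_instance

/-- The level-`n` Sierpiński carpet graph, as a graph on ℤ². -/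
def carpetGraph (n : ℕ) : SimpleGraph (ℤ × ℤ) where
  Adj u v := carpetVertex n u ∧ carpetVertex n v ∧ l1 u v = 1
  symm := ⟨by rintro u v ⟨h1, h2, h3⟩; exact ⟨h2, h1, by unfold l1 at *; omega⟩⟩
  loopless := ⟨by rintro u ⟨-, -, h⟩; unfold l1 at h; omega⟩

/-- The vertex set of the level-`n` carpet graph. -/
noncomputable def carpetVerts (n : ℕ) : Finset (ℤ × ℤ) :=
  ((Finset.Icc (0:ℤ) (3^(n-1))) ×ˢ (Finset.Icc (0:ℤ) (3^(n-1)))).filter (carpetVertex n)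


private lemma walk_bound : ∀ {u v : ℤ × ℤ} (p : (carpetGraph 3).Walk u v),
    l1 u v ≤ p.length ∧ p.length % 2 = l1 u v % 2 := by
  intro u v p
  induction p with
  | nil => simp only [SimpleGraph.Walk.length_nil]; unfold l1; omega
  | @cons u w v h q ih =>
    have h1 := h.2.2
    simp only [SimpleGraph.Walk.length_cons]
    unfold l1 at *
    omega

private lemma no_tight : ∀ {u v : ℤ × ℤ} (p : (carpetGraph 3).Walk u v),
    v = ((9:ℤ),(4:ℤ)) → u.2 = 4 → 0 ≤ u.1 → u.1 ≤ 3 → (p.length : ℤ) = 9 - u.1 → False := by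
  intro u v p
  induction p with
  | nil => rintro rfl _ _ h3 _; norm_num at h3
  | @cons u w _ h q ih =>
    rintro rfl h2 h0 h3 hl
    simp only [SimpleGraph.Walk.length_cons] at hl
    obtain ⟨-, hw, h1⟩ := h
    have hq := (walk_bound q).1
    have hwc : w.1 = u.1 + 1 ∧ w.2 = 4 := by unfold l1 at *; omega
    by_cases hu3 : u.1 = 3
    · have hw44 : w = ((4:ℤ), (4:ℤ)) := Prod.ext (by omega) (by omega)
      rw [hw44] at hw
      exact (by decide : ¬ carpetVertex 3 ((4:ℤ),(4:ℤ))) hw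
    · exact ih rfl hwc.2 (by omega) (by omega) (by unfold l1 at *; omega)

private def W3 : (carpetGraph 3).Walk ((0:ℤ),(4:ℤ)) ((9:ℤ),(4:ℤ)) :=
  .cons (v := ((1:ℤ),(4:ℤ))) ⟨by decide, by decide, by decide⟩ <|
  .cons (v := ((2:ℤ),(4:ℤ))) ⟨by decide, by decide, by decide⟩ <|
  .cons (v := ((3:ℤ),(4:ℤ))) ⟨by decide, by decide, by decide⟩ <|
  .cons (v := ((3:ℤ),(3:ℤ))) ⟨by decide, by decide, by decide⟩ <|
  .cons (v := ((4:ℤ),(3:ℤ))) ⟨by decide, by decide, by decide⟩ <|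
  .cons (v := ((5:ℤ),(3:ℤ))) ⟨by decide, by decide, by decide⟩ <|
  .cons (v := ((6:ℤ),(3:ℤ))) ⟨by decide, by decide, by decide⟩ <|
  .cons (v := ((6:ℤ),(4:ℤ))) ⟨by decide, by decide, by decide⟩ <|
  .cons (v := ((7:ℤ),(4:ℤ))) ⟨by decide, by decide, by decide⟩ <|
  .cons (v := ((8:ℤ),(4:ℤ))) ⟨by decide, by decide, by decide⟩ <|
  .cons (v := ((9:ℤ),(4:ℤ))) ⟨by decide, by decide, by decide⟩ .nil

private lemma W3_len : W3.length = 11 := rfl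

/-- In the level-3 carpet graph, the distance between (0,4) and (9,4) exceeds the
ℓ¹ distance 9; in fact it equals 11. -/
theorem carpet3_dist :
    9 < (carpetGraph 3).dist ((0:ℤ), (4:ℤ)) ((9:ℤ), (4:ℤ)) ∧
    (carpetGraph 3).dist ((0:ℤ), (4:ℤ)) ((9:ℤ), (4:ℤ)) = 11 ∧
    l1 ((0:ℤ), (4:ℤ)) ((9:ℤ), (4:ℤ)) = 9 := by
  have hreach : (carpetGraph 3).Reachable ((0:ℤ),(4:ℤ)) ((9:ℤ),(4:ℤ)) := ⟨W3⟩
  have hle : (carpetGraph 3).dist ((0:ℤ),(4:ℤ)) ((9:ℤ),(4:ℤ)) ≤ 11 :=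
    W3_len ▸ SimpleGraph.dist_le W3
  obtain ⟨p, hp⟩ := hreach.exists_walk_length_eq_dist
  have hb := walk_bound p
  have hl1 : l1 ((0:ℤ),(4:ℤ)) ((9:ℤ),(4:ℤ)) = 9 := by decide
  have hne9 : p.length ≠ 9 := by
    intro h
    exact no_tight p rfl rfl (by norm_num) (by norm_num) (by rw [h]; norm_num)
  rw [hl1] at hb
  rw [hp] at hb hne9
  refine ⟨by omega, by omega, hl1⟩
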